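/- Let k ≥ 0 be an integer, let r > 0 and δ > 0 with 60·(k+1)²·δ ≤ r, and let B be a real (k+1)×(k+1) matrix indexed by {0,1,…,k} whose entries satisfy |B_{αβ} − r² − r²·𝟙(α = β and α ≠ 0)| ≤ 15·r·δ for all α, β ∈ {0,1,…,k}, where 𝟙(α = β and α ≠ 0) equals 1 when α = β and α ≠ 0, and 0 otherwise. Then ‖B·v‖ ≥ (r²/(4·(k+1)))·‖v‖ for every v ∈ ℝ^{k+1}; in particular the least singular value of B is at least r²/(4·(k+1)). -/

import Mathlib

open scoped BigOperators

set_option maxHeartbeats 1000000 in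
/-- a `(k+1)×(k+1)` matrix whose entries are within `15·r·δ` of
`r²·(1 + 𝟙(α = β ∧ α ≠ 0))` satisfies `‖B·v‖ ≥ (r²/(4(k+1)))·‖v‖` for every `v`
(Euclidean norms); in particular its least singular value is at least `r²/(4(k+1))`. -/
theorem matrix_least_singular_value_lower_bound
    (k : ℕ) (r δ : ℝ) (hr : 0 < r) (hδ : 0 < δ)
    (hkδ : 60 * ((k : ℝ) + 1) ^ 2 * δ ≤ r)
    (B : Matrix (Fin (k + 1)) (Fin (k + 1)) ℝ)
    (hB : ∀ α β : Fin (k + 1),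
      |B α β - r ^ 2 - r ^ 2 * (if α = β ∧ α ≠ 0 then 1 else 0)| ≤ 15 * r * δ) :
    ∀ v : Fin (k + 1) → ℝ,
      r ^ 2 / (4 * ((k : ℝ) + 1)) * Real.sqrt (∑ i, v i ^ 2) ≤
        Real.sqrt (∑ i, (B.mulVec v i) ^ 2) := by
  intro v
  set K : ℝ := (k : ℝ) + 1 with hKdef
  have hK1 : (1:ℝ) ≤ K := by
    rw [hKdef]; have : (0:ℝ) ≤ (k:ℝ) := Nat.cast_nonneg k; linarith
  have hK0 : (0:ℝ) < K := lt_of_lt_of_le one_pos hK1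
  set s : ℝ := ∑ j, v j with hs
  set w : Fin (k+1) → ℝ := fun i => s + (if i = 0 then 0 else v i) with hwdef
  set e : Fin (k+1) → ℝ := fun i => B.mulVec v i - r^2 * w i with hedef
  -- indicator sum
  have hsum_ind : ∀ i : Fin (k+1),
      ∑ j, (if i = j ∧ i ≠ 0 then (1:ℝ) else 0) * v j = (if i = 0 then 0 else v i) := by
    intro i
    by_cases hi : i = 0
    · simp [hi]
    · simp only [hi, ne_eq, not_false_iff, and_true, if_false]
      simp [ite_mul, Finset.sum_ite_eq]
  -- decomposition of B.mulVec
  have hdecomp : ∀ i, e i = ∑ j, (B i j - r^2 - r^2 * (if i = j ∧ i ≠ 0 then 1 else 0)) * v j := by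
    intro i
    have hmv : B.mulVec v i = ∑ j, B i j * v j := rfl
    have h1 : ∑ j, (B i j - r^2 - r^2 * (if i = j ∧ i ≠ 0 then 1 else 0)) * v j
        = (∑ j, B i j * v j) - r^2 * s - r^2 * ∑ j, (if i = j ∧ i ≠ 0 then (1:ℝ) else 0) * v j := by
      rw [hs, Finset.mul_sum, Finset.mul_sum, ← Finset.sum_sub_distrib,
        ← Finset.sum_sub_distrib]
      exact Finset.sum_congr rfl fun j _ => by ring
    rw [hedef]
    simp only [hmv, h1, hsum_ind i, hwdef]
    ring
  -- entrywise bound on the error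
  have hEsq : ∀ i j : Fin (k+1),
      (B i j - r^2 - r^2 * (if i = j ∧ i ≠ 0 then 1 else 0))^2 ≤ (15*r*δ)^2 := by
    intro i j
    have h := hB i j
    have h2 := abs_nonneg (B i j - r ^ 2 - r ^ 2 * (if i = j ∧ i ≠ 0 then 1 else 0))
    nlinarith [sq_abs (B i j - r ^ 2 - r ^ 2 * (if i = j ∧ i ≠ 0 then 1 else 0))]
  -- bound on ∑ e²
  have hesum : ∑ i, e i ^ 2 ≤ (K * (15*r*δ))^2 * ∑ j, v j ^ 2 := by
    have hrow : ∀ i : Fin (k+1), e i ^ 2 ≤ (K * (15*r*δ)^2) * ∑ j, v j ^ 2 := by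
      intro i
      rw [hdecomp i]
      have hcs := Finset.sum_mul_sq_le_sq_mul_sq Finset.univ
        (fun j => B i j - r^2 - r^2 * (if i = j ∧ i ≠ 0 then 1 else 0)) v
      have hEs : ∑ j, (B i j - r^2 - r^2 * (if i = j ∧ i ≠ 0 then 1 else 0))^2
          ≤ K * (15*r*δ)^2 := by
        calc ∑ j, (B i j - r^2 - r^2 * (if i = j ∧ i ≠ 0 then 1 else 0))^2
            ≤ ∑ _j : Fin (k+1), (15*r*δ)^2 := Finset.sum_le_sum (fun j _ => hEsq i j)
          _ = K * (15*r*δ)^2 := by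
              rw [Finset.sum_const, Finset.card_univ, Fintype.card_fin, nsmul_eq_mul]
              push_cast [hKdef]; ring
      have hvnn : (0:ℝ) ≤ ∑ j, v j ^ 2 := Finset.sum_nonneg fun j _ => sq_nonneg _
      calc (∑ j, (B i j - r^2 - r^2 * (if i = j ∧ i ≠ 0 then 1 else 0)) * v j)^2
          ≤ (∑ j, (B i j - r^2 - r^2 * (if i = j ∧ i ≠ 0 then 1 else 0))^2) * ∑ j, v j ^2 := hcs
        _ ≤ (K * (15*r*δ)^2) * ∑ j, v j ^ 2 := by
            exact mul_le_mul_of_nonneg_right hEs hvnn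
    calc ∑ i, e i ^ 2 ≤ ∑ _i : Fin (k+1), (K * (15*r*δ)^2) * ∑ j, v j ^ 2 :=
          Finset.sum_le_sum (fun i _ => hrow i)
      _ = (K * (15*r*δ))^2 * ∑ j, v j ^ 2 := by
          rw [Finset.sum_const, Finset.card_univ, Fintype.card_fin, nsmul_eq_mul]
          push_cast [hKdef]; ring
  -- structure of w
  have hw0 : w 0 = s := by simp [hwdef]
  have hd : ∑ i, (if i = (0 : Fin (k+1)) then (0:ℝ) else v i) = s - v 0 := by
    have h : ∀ i : Fin (k+1), (if i = (0:Fin (k+1)) then (0:ℝ) else v i)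
        = v i - (if i = 0 then v i else 0) := by
      intro i; by_cases h : i = 0 <;> simp [h]
    rw [Finset.sum_congr rfl (fun i _ => h i), Finset.sum_sub_distrib,
      Finset.sum_ite_eq' Finset.univ (0 : Fin (k+1)) v]
    simp [hs]
  have hwsum : ∑ i, w i = K * s + (s - v 0) := by
    rw [hwdef]
    simp only []
    rw [Finset.sum_add_distrib, hd, Finset.sum_const, Finset.card_univ, Fintype.card_fin,
      nsmul_eq_mul]
    push_cast [hKdef]; ring
  have hv0 : v 0 = (K + 1) * w 0 - ∑ i, w i := by rw [hwsum, hw0]; ring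
  -- Cauchy-Schwarz bound on v 0
  have hWnn : (0:ℝ) ≤ ∑ i, w i ^ 2 := Finset.sum_nonneg fun i _ => sq_nonneg _
  have hw0sq : w 0 ^ 2 ≤ ∑ i, w i ^ 2 :=
    Finset.single_le_sum (fun i _ => sq_nonneg (w i)) (Finset.mem_univ 0)
  have hv0sq : v 0 ^ 2 ≤ (K^2 + (K-1)) * ∑ i, w i ^ 2 := by
    set c : Fin (k+1) → ℝ := fun i => if i = 0 then K else -1 with hcdef
    have hcw : ∑ i, c i * w i = v 0 := by
      have h : ∀ i : Fin (k+1), c i * w i = (if i = 0 then (K+1) * w i else 0) - w i := by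
        intro i; by_cases h : i = 0 <;> simp [hcdef, h] <;> ring
      rw [Finset.sum_congr rfl (fun i _ => h i), Finset.sum_sub_distrib,
        Finset.sum_ite_eq' Finset.univ (0 : Fin (k+1)) (fun i => (K+1) * w i)]
      rw [if_pos (Finset.mem_univ _)]
      linarith [hv0]
    have hc2 : ∑ i, c i ^ 2 = K^2 + (K - 1) := by
      have h : ∀ i : Fin (k+1), c i ^ 2 = (if i = 0 then K^2 - 1 else 0) + 1 := by
        intro i; by_cases h : i = 0 <;> simp [hcdef, h] <;> ring
      rw [Finset.sum_congr rfl (fun i _ => h i), Finset.sum_add_distrib,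
        Finset.sum_ite_eq' Finset.univ (0 : Fin (k+1)) (fun _ => K^2 - 1),
        Finset.sum_const, Finset.card_univ, Fintype.card_fin, nsmul_eq_mul]
      simp only [Finset.mem_univ, if_true]
      push_cast [hKdef]; ring
    have hcs := Finset.sum_mul_sq_le_sq_mul_sq Finset.univ c w
    rw [hcw, hc2] at hcs
    exact hcs
  -- remaining coordinates
  have hrest : ∑ i ∈ Finset.univ.erase (0 : Fin (k+1)), v i ^ 2
      ≤ 2 * (∑ i, w i ^ 2) + 2 * (K - 1) * w 0 ^ 2 := by
    have h1 : ∀ i ∈ Finset.univ.erase (0 : Fin (k+1)), v i ^ 2 ≤ 2 * w i ^ 2 + 2 * w 0 ^ 2 := by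
      intro i hi
      have hi0 : i ≠ 0 := Finset.ne_of_mem_erase hi
      have hvi : v i = w i - w 0 := by simp [hwdef, hi0]
      rw [hvi]; nlinarith [sq_nonneg (w i + w 0)]
    calc ∑ i ∈ Finset.univ.erase (0 : Fin (k+1)), v i ^ 2
        ≤ ∑ i ∈ Finset.univ.erase (0 : Fin (k+1)), (2 * w i ^ 2 + 2 * w 0 ^ 2) :=
          Finset.sum_le_sum h1
      _ = 2 * (∑ i ∈ Finset.univ.erase (0 : Fin (k+1)), w i ^ 2) + 2 * (K-1) * w 0 ^ 2 := by
          rw [Finset.sum_add_distrib, ← Finset.mul_sum, Finset.sum_const,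
            Finset.card_erase_of_mem (Finset.mem_univ _), Finset.card_univ, Fintype.card_fin,
            nsmul_eq_mul]
          push_cast [hKdef]; ring
      _ ≤ 2 * (∑ i, w i ^ 2) + 2 * (K-1) * w 0 ^ 2 := by
          have : ∑ i ∈ Finset.univ.erase (0 : Fin (k+1)), w i ^ 2 ≤ ∑ i, w i ^ 2 :=
            Finset.sum_le_sum_of_subset_of_nonneg (Finset.erase_subset _ _)
              (fun i _ _ => sq_nonneg _)
          linarith
  -- F1 : ∑ v² ≤ 4K² ∑ w²
  have hF1 : ∑ i, v i ^ 2 ≤ 4 * K^2 * ∑ i, w i ^ 2 := by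
    have hsplit : ∑ i, v i ^ 2
        = v 0 ^ 2 + ∑ i ∈ Finset.univ.erase (0 : Fin (k+1)), v i ^ 2 :=
      (Finset.add_sum_erase _ _ (Finset.mem_univ 0)).symm
    rw [hsplit]
    nlinarith [mul_nonneg (sub_nonneg.2 hK1) hWnn, mul_nonneg (sub_nonneg.2 hK1)
      (sub_nonneg.2 hw0sq), sq_nonneg (K - 1), mul_nonneg (mul_nonneg (sub_nonneg.2 hK1)
      (sub_nonneg.2 hK1)) hWnn]
  -- Euclidean norms
  have hnorm : ∀ f : EuclideanSpace ℝ (Fin (k+1)), ‖f‖ = Real.sqrt (∑ i, f i ^ 2) := by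
    intro f
    rw [EuclideanSpace.norm_eq]
    congr 1
    exact Finset.sum_congr rfl fun i _ => by rw [Real.norm_eq_abs, sq_abs]
  set Nv := Real.sqrt (∑ i, v i ^ 2) with hNv
  set Nw := Real.sqrt (∑ i, w i ^ 2) with hNw
  set Ne := Real.sqrt (∑ i, e i ^ 2) with hNe
  set Nu := Real.sqrt (∑ i, (B.mulVec v i) ^ 2) with hNu
  have hNvnn : 0 ≤ Nv := Real.sqrt_nonneg _
  have hNwnn : 0 ≤ Nw := Real.sqrt_nonneg _
  have hNenn : 0 ≤ Ne := Real.sqrt_nonneg _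
  -- Nv ≤ 2K Nw
  have hB1 : Nv ≤ 2 * K * Nw := by
    have := Real.sqrt_le_sqrt hF1
    rwa [show 4 * K^2 * ∑ i, w i ^ 2 = (2*K)^2 * ∑ i, w i ^2 by ring,
      Real.sqrt_mul (by positivity), Real.sqrt_sq (by positivity)] at this
  -- Ne ≤ K 15rδ Nv
  have hC : Ne ≤ K * (15*r*δ) * Nv := by
    have := Real.sqrt_le_sqrt hesum
    rwa [Real.sqrt_mul (by positivity), Real.sqrt_sq (by positivity)] at this
  -- triangle inequality
  have hA : r^2 * Nw - Ne ≤ Nu := by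
    set a : EuclideanSpace ℝ (Fin (k+1)) := WithLp.toLp 2 (fun i => r^2 * w i) with hadef
    set u : EuclideanSpace ℝ (Fin (k+1)) := WithLp.toLp 2 (fun i => B.mulVec v i) with hudef
    have h1 : ‖a‖ = r^2 * Nw := by
      rw [hnorm a, hNw]
      rw [show ∑ i, a i ^ 2 = (r^2)^2 * ∑ i, w i ^ 2 by
        rw [Finset.mul_sum]; exact Finset.sum_congr rfl fun i _ => by rw [hadef]; ring]
      rw [Real.sqrt_mul (by positivity), Real.sqrt_sq (by positivity)]
    have h2 : ‖u‖ = Nu := by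
      rw [hnorm u, hNu]
    have h3 : ‖a - u‖ = Ne := by
      rw [hnorm (a - u), hNe]
      congr 1
      refine Finset.sum_congr rfl fun i _ => ?_
      have : (a - u) i = a i - u i := rfl
      rw [this, hadef, hudef, hedef]
      ring
    have htri := norm_sub_norm_le a u
    rw [h1, h2, h3] at htri
    linarith
  -- finish
  rw [div_mul_eq_mul_div, div_le_iff₀ (by linarith : (0:ℝ) < 4 * K)]
  nlinarith [mul_le_mul_of_nonneg_left hB1 (sq_nonneg r),
    mul_le_mul_of_nonneg_left hA (by linarith : (0:ℝ) ≤ 4 * K),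
    mul_le_mul_of_nonneg_right hkδ (mul_nonneg hr.le hNvnn),
    mul_le_mul_of_nonneg_left hC (by linarith : (0:ℝ) ≤ 4 * K)]
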